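/- arXiv:2103.00827 — 4 statements merged into one kernel-verified Lean document; each statement's English description precedes it below -/
import Mathlib

section
/- The period set of a linear recurrence equals the set of orders of all (nonzero, with nonzero constant term) divisors of its characteristic polynomial: P(f) = { ord(g) : g divides f }, where the period set is the set of least periods of all sequences generated by the recurrence over all initial states. -/
open Polynomial

/-- The order of a polynomial `g` (with `g(0) ≠ 0`): the least `j ≥ 1` with `g ∣ x^j - 1`. -/
noncomputable def polyOrd {F : Type*} [Field F] (g : Polynomial F) : ℕ :=
  sInf {j : ℕ | 1 ≤ j ∧ g ∣ X ^ j - 1}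

namespace Stmt5Aux

variable {F : Type*} [Field F]

lemma coeff_one_sub_pow_mul (A : PowerSeries F) {p m : ℕ} (hm : p ≤ m) :
    (PowerSeries.coeff m) ((1 - (PowerSeries.X : PowerSeries F) ^ p) * A) =
      (PowerSeries.coeff m) A - (PowerSeries.coeff (m - p)) A := by
  rw [sub_mul, one_mul, map_sub]
  congr 1
  conv_lhs => rw [show m = (m - p) + p from (Nat.sub_add_cancel hm).symm]
  rw [PowerSeries.coeff_X_pow_mul]

lemma coe_one_sub_pow (p : ℕ) :
    ((1 - X ^ p : F[X]) : PowerSeries F) = 1 - (PowerSeries.X : PowerSeries F) ^ p := by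
  rw [← Polynomial.coeToPowerSeries.ringHom_apply, map_sub, map_one, map_pow,
    Polynomial.coeToPowerSeries.ringHom_apply, Polynomial.coe_X]

lemma coeff_f_mul (r : ℕ) (c : ℕ → F) (a : ℕ → F) (n : ℕ) :
    (PowerSeries.coeff (n + r))
        (((1 - ∑ i ∈ Finset.range r, C (c i) * X ^ (i + 1) : F[X]) : PowerSeries F) *
          PowerSeries.mk a) =
      a (n + r) - ∑ i ∈ Finset.range r, c i * a (n + r - 1 - i) := by
  have hcoe : ((1 - ∑ i ∈ Finset.range r, C (c i) * X ^ (i + 1) : F[X]) : PowerSeries F)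
      = 1 - ∑ i ∈ Finset.range r,
          PowerSeries.C (c i) * (PowerSeries.X : PowerSeries F) ^ (i + 1) := by
    rw [← Polynomial.coeToPowerSeries.ringHom_apply, map_sub, map_one, map_sum]
    simp
  rw [hcoe, sub_mul, one_mul, map_sub, PowerSeries.coeff_mk]
  congr 1
  rw [Finset.sum_mul, map_sum]
  refine Finset.sum_congr rfl fun i hi => ?_
  have hir : i + 1 ≤ r := Finset.mem_range.mp hi
  rw [mul_assoc, PowerSeries.coeff_C_mul]
  congr 1
  conv_lhs => rw [show n + r = (n + r - 1 - i) + (i + 1) from by omega]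
  rw [PowerSeries.coeff_X_pow_mul, PowerSeries.coeff_mk]

lemma coeff_zero_f (r : ℕ) (c : ℕ → F) :
    (1 - ∑ i ∈ Finset.range r, C (c i) * X ^ (i + 1) : F[X]).coeff 0 = 1 := by
  rw [Polynomial.coeff_sub, Polynomial.coeff_one, Polynomial.finset_sum_coeff]
  simp

lemma f_ne_zero (r : ℕ) (c : ℕ → F) :
    (1 - ∑ i ∈ Finset.range r, C (c i) * X ^ (i + 1) : F[X]) ≠ 0 := by
  intro h
  have := coeff_zero_f r c
  rw [h] at this
  simp at this

lemma natDegree_f {r : ℕ} (hr : 0 < r) {c : ℕ → F} (hc : c (r - 1) ≠ 0) :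
    (1 - ∑ i ∈ Finset.range r, C (c i) * X ^ (i + 1) : F[X]).natDegree = r := by
  have hcr : (1 - ∑ i ∈ Finset.range r, C (c i) * X ^ (i + 1) : F[X]).coeff r = -c (r - 1) := by
    rw [Polynomial.coeff_sub, Polynomial.coeff_one, Polynomial.finset_sum_coeff]
    rw [Finset.sum_eq_single (r - 1)]
    · simp only [Polynomial.coeff_C_mul, Polynomial.coeff_X_pow]
      rw [if_neg (show ¬ r = 0 from by omega), if_pos (show r = r - 1 + 1 from by omega)]
      ring
    · intro i hi hne
      have : i + 1 ≤ r := Finset.mem_range.mp hi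
      simp only [Polynomial.coeff_C_mul, Polynomial.coeff_X_pow]
      rw [if_neg (by omega)]
      ring
    · intro h
      exact absurd (Finset.mem_range.mpr (by omega)) h
  refine le_antisymm ?_ (Polynomial.le_natDegree_of_ne_zero (by rw [hcr]; simpa using hc))
  refine Polynomial.natDegree_le_iff_coeff_eq_zero.mpr fun m hm => ?_
  rw [Polynomial.coeff_sub, Polynomial.coeff_one, Polynomial.finset_sum_coeff]
  rw [if_neg (by omega), Finset.sum_eq_zero, sub_self]
  intro i hi
  have : i + 1 ≤ r := Finset.mem_range.mp hi
  simp only [Polynomial.coeff_C_mul, Polynomial.coeff_X_pow]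
  rw [if_neg (by omega)]
  ring

lemma coe_trunc_eq {B : PowerSeries F} {N : ℕ}
    (h : ∀ m, N ≤ m → PowerSeries.coeff m B = 0) :
    ((PowerSeries.trunc N B : F[X]) : PowerSeries F) = B := by
  ext m
  rw [Polynomial.coeff_coe, PowerSeries.coeff_trunc]
  split_ifs with hm
  · rfl
  · exact (h m (by omega)).symm

lemma upgrade {r : ℕ} (hr : 0 < r) {c : ℕ → F} (hc : c (r - 1) ≠ 0) {a : ℕ → F}
    (ha : ∀ n, a (n + r) = ∑ i ∈ Finset.range r, c i * a (n + r - 1 - i))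
    {p l : ℕ} (hl : ∀ n ≥ l, a (n + p) = a n) : ∀ n, a (n + p) = a n := by
  have split : ∀ k, a (k + r) =
      (∑ i ∈ Finset.range (r - 1), c i * a (k + r - 1 - i)) + c (r - 1) * a k := by
    intro k
    have hsum : ∑ i ∈ Finset.range r, c i * a (k + r - 1 - i)
        = (∑ i ∈ Finset.range (r - 1), c i * a (k + r - 1 - i))
          + c (r - 1) * a (k + r - 1 - (r - 1)) := by
      rw [← Finset.sum_range_succ, Nat.sub_add_cancel hr]
    rw [ha k, hsum, show k + r - 1 - (r - 1) = k from by omega]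
  suffices H : ∀ t n, l - n ≤ t → a (n + p) = a n by
    intro n; exact H (l - n) n le_rfl
  intro t
  induction t with
  | zero => intro n hn; exact hl n (by omega)
  | succ t ih =>
    intro n hn
    by_cases hln : l ≤ n
    · exact hl n hln
    · have h1 : a (n + p + r) = a (n + r) := by
        rw [show n + p + r = n + r + p from by ring]
        exact ih (n + r) (by omega)
      have e1 := split n
      have e2 := split (n + p)
      rw [h1] at e2
      have h2 : ∀ i ∈ Finset.range (r - 1),
          c i * a (n + p + r - 1 - i) = c i * a (n + r - 1 - i) := by
        intro i hi
        have hi' : i < r - 1 := Finset.mem_range.mp hi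
        rw [show n + p + r - 1 - i = (n + r - 1 - i) + p from by omega,
          ih (n + r - 1 - i) (by omega)]
      rw [Finset.sum_congr rfl h2] at e2
      have h3 := e1.symm.trans e2
      have h4 := add_left_cancel h3
      exact (mul_left_cancel₀ hc h4).symm

lemma period_iff {g h₁ : F[X]} {a : ℕ → F}
    (hga : (g : PowerSeries F) * PowerSeries.mk a = (h₁ : PowerSeries F))
    (hcop : IsCoprime g h₁) (hg : g ≠ 0)
    (hdeg : h₁ = 0 ∨ h₁.natDegree < g.natDegree)
    {p : ℕ} (hp : 1 ≤ p) :
    (∀ n, a (n + p) = a n) ↔ g ∣ X ^ p - 1 := by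
  have h1X : (1 - X ^ p : F[X]) ≠ 0 := by
    intro h
    have : (1 - X ^ p : F[X]).coeff p = -1 := by
      rw [Polynomial.coeff_sub, Polynomial.coeff_one, Polynomial.coeff_X_pow,
        if_neg (by omega), if_pos rfl]
      ring
    rw [h] at this
    simp at this
  have hdegX : (1 - X ^ p : F[X]).natDegree = p := by
    rw [show (1 - X ^ p : F[X]) = -(X ^ p - C 1) from by rw [Polynomial.C_1]; ring,
      Polynomial.natDegree_neg, Polynomial.natDegree_X_pow_sub_C]
  constructor
  · intro hper
    have hcz : ∀ m, p ≤ m → PowerSeries.coeff m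
        ((1 - (PowerSeries.X : PowerSeries F) ^ p) * PowerSeries.mk a) = 0 := by
      intro m hm
      rw [coeff_one_sub_pow_mul _ hm, PowerSeries.coeff_mk, PowerSeries.coeff_mk]
      have := hper (m - p)
      rw [show m - p + p = m from by omega] at this
      rw [this, sub_self]
    have hqc := coe_trunc_eq hcz
    have key : g * PowerSeries.trunc p ((1 - (PowerSeries.X : PowerSeries F) ^ p) *
        PowerSeries.mk a) = (1 - X ^ p) * h₁ := by
      rw [← Polynomial.coe_inj, Polynomial.coe_mul, Polynomial.coe_mul, hqc,
        coe_one_sub_pow, ← hga]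
      ring
    have hdvd : g ∣ (1 - X ^ p) * h₁ := ⟨_, key.symm⟩
    have := hcop.dvd_of_dvd_mul_right hdvd
    rw [show (X ^ p - 1 : F[X]) = -(1 - X ^ p) from by ring]
    exact dvd_neg.mpr this
  · intro hdvd
    have hdvd' : g ∣ 1 - X ^ p := by
      rw [show (1 - X ^ p : F[X]) = -(X ^ p - 1) from by ring]
      exact dvd_neg.mpr hdvd
    obtain ⟨s, hs⟩ := hdvd'
    have hser : (1 - (PowerSeries.X : PowerSeries F) ^ p) * PowerSeries.mk a
        = ((s * h₁ : F[X]) : PowerSeries F) := by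
      rw [Polynomial.coe_mul, ← hga, ← coe_one_sub_pow, hs, Polynomial.coe_mul]
      ring
    have hcoeff : ∀ m, p ≤ m → PowerSeries.coeff m
        ((1 - (PowerSeries.X : PowerSeries F) ^ p) * PowerSeries.mk a) = 0 := by
      intro m hm
      rw [hser, Polynomial.coeff_coe]
      by_cases h1z : h₁ = 0
      · simp [h1z]
      rcases hdeg with h0 | hlt
      · simp [h0]
      apply Polynomial.coeff_eq_zero_of_natDegree_lt
      have hs0 : s ≠ 0 := by rintro rfl; rw [mul_zero] at hs; exact h1X hs
      have e1 : g.natDegree + s.natDegree = p := by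
        rw [← Polynomial.natDegree_mul hg hs0, ← hs, hdegX]
      have e2 : (s * h₁).natDegree = s.natDegree + h₁.natDegree :=
        Polynomial.natDegree_mul hs0 h1z
      omega
    intro n
    have h := hcoeff (n + p) (Nat.le_add_left p n)
    rw [coeff_one_sub_pow_mul _ (Nat.le_add_left p n), PowerSeries.coeff_mk,
      PowerSeries.coeff_mk, show n + p - p = n from by omega] at h
    exact sub_eq_zero.mp h

lemma periodSet_eq {r : ℕ} (hr : 0 < r) {c : ℕ → F} (hc : c (r - 1) ≠ 0) {a : ℕ → F}
    (ha : ∀ n, a (n + r) = ∑ i ∈ Finset.range r, c i * a (n + r - 1 - i))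
    {g h₁ : F[X]} (hga : (g : PowerSeries F) * PowerSeries.mk a = (h₁ : PowerSeries F))
    (hcop : IsCoprime g h₁) (hg : g ≠ 0) (hdeg : h₁ = 0 ∨ h₁.natDegree < g.natDegree) :
    {p' : ℕ | 1 ≤ p' ∧ ∃ l : ℕ, ∀ n ≥ l, a (n + p') = a n}
      = {j : ℕ | 1 ≤ j ∧ g ∣ X ^ j - 1} := by
  ext p
  simp only [Set.mem_setOf_eq]
  constructor
  · rintro ⟨hp, l, hl⟩
    exact ⟨hp, (period_iff hga hcop hg hdeg hp).mp (upgrade hr hc ha hl)⟩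
  · rintro ⟨hp, hdvd⟩
    exact ⟨hp, 0, fun n _ => (period_iff hga hcop hg hdeg hp).mpr hdvd n⟩

lemma sInf_eq_one {S : Set ℕ} (h1 : 1 ∈ S) (h0 : (0 : ℕ) ∉ S) : sInf S = 1 :=
  le_antisymm (Nat.sInf_le h1)
    (Nat.one_le_iff_ne_zero.mpr fun h => h0 (h ▸ Nat.sInf_mem ⟨1, h1⟩))

end Stmt5Aux

/-- The period set of a linear recurrence equals the set of orders of all nonzero divisors
with nonzero constant term of its characteristic polynomial `f(x) = 1 - ∑_{i=1}^r c_i x^i`.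

The period of a generated sequence is the least `p ≥ 1` such that `a_{n+p} = a_n` for all
sufficiently large `n`.  Indexing convention: `a 0, …, a (r-1)` encode the initial state and
`c i` denotes the paper's `c_{i+1}`. -/
theorem stmt_5 {F : Type*} [Field F] [Fintype F] (r : ℕ) (hr : 0 < r) (c : ℕ → F)
    (hc : c (r - 1) ≠ 0) :
    {p : ℕ | ∃ a : ℕ → F,
        (∀ n : ℕ, a (n + r) = ∑ i ∈ Finset.range r, c i * a (n + r - 1 - i)) ∧
        p = sInf {p' : ℕ | 1 ≤ p' ∧ ∃ l : ℕ, ∀ n ≥ l, a (n + p') = a n}} =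
      {t : ℕ | ∃ g : Polynomial F,
        g ∣ (1 - ∑ i ∈ Finset.range r, C (c i) * X ^ (i + 1)) ∧
        g ≠ 0 ∧ g.coeff 0 ≠ 0 ∧ t = polyOrd g} := by
  classical
  set f : F[X] := 1 - ∑ i ∈ Finset.range r, C (c i) * X ^ (i + 1) with hfdef
  have hf0 : f.coeff 0 = 1 := Stmt5Aux.coeff_zero_f r c
  have hfne : f ≠ 0 := Stmt5Aux.f_ne_zero r c
  have hfdeg : f.natDegree = r := Stmt5Aux.natDegree_f hr hc
  ext p
  simp only [Set.mem_setOf_eq]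
  constructor
  · rintro ⟨a, ha, hp⟩
    have hAcoeff : ∀ m, r ≤ m →
        PowerSeries.coeff m ((f : PowerSeries F) * PowerSeries.mk a) = 0 := by
      intro m hm
      have hthis := Stmt5Aux.coeff_f_mul r c a (m - r)
      have ham := ha (m - r)
      rw [show m - r + r = m from by omega] at hthis ham
      rw [← hfdef] at hthis
      rw [hthis, ham, sub_self]
    set h : F[X] := PowerSeries.trunc r ((f : PowerSeries F) * PowerSeries.mk a) with hh
    have hhc : (h : PowerSeries F) = (f : PowerSeries F) * PowerSeries.mk a :=
      Stmt5Aux.coe_trunc_eq hAcoeff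
    set d : F[X] := GCDMonoid.gcd h f with hd
    have hdne : d ≠ 0 := gcd_ne_zero_of_right hfne
    set g : F[X] := f / d with hg
    set h₁ : F[X] := h / d with hh1
    have hdg : d * g = f := EuclideanDomain.mul_div_cancel' hdne (gcd_dvd_right h f)
    have hdh : d * h₁ = h := EuclideanDomain.mul_div_cancel' hdne (gcd_dvd_left h f)
    have hgne : g ≠ 0 := right_div_gcd_ne_zero hfne
    have hcop : IsCoprime g h₁ := (isCoprime_div_gcd_div_gcd hfne).symm
    have hga : (g : PowerSeries F) * PowerSeries.mk a = (h₁ : PowerSeries F) := by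
      have hdne' : ((d : F[X]) : PowerSeries F) ≠ 0 := by
        simpa using hdne
      apply mul_left_cancel₀ hdne'
      rw [← mul_assoc, ← Polynomial.coe_mul, hdg, ← hhc, ← hdh, Polynomial.coe_mul]
    have hdeg : h₁ = 0 ∨ h₁.natDegree < g.natDegree := by
      by_cases h1z : h₁ = 0
      · exact Or.inl h1z
      · right
        have hhz : h ≠ 0 := by rw [← hdh]; exact mul_ne_zero hdne h1z
        have hdegh : h.natDegree < r := by
          have hlt := PowerSeries.degree_trunc_lt ((f : PowerSeries F) * PowerSeries.mk a) r
          rw [← hh] at hlt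
          exact (Polynomial.natDegree_lt_iff_degree_lt hhz).mpr hlt
        have e1 : d.natDegree + g.natDegree = r := by
          rw [← Polynomial.natDegree_mul hdne hgne, hdg, hfdeg]
        have e2 : d.natDegree + h₁.natDegree = h.natDegree := by
          rw [← Polynomial.natDegree_mul hdne h1z, hdh]
        omega
    have hgdvd : g ∣ f := ⟨d, by rw [← hdg]; ring⟩
    have hgc0 : g.coeff 0 ≠ 0 := by
      intro h0
      have : f.coeff 0 = d.coeff 0 * g.coeff 0 := by
        rw [← hdg, Polynomial.mul_coeff_zero]
      rw [hf0, h0, mul_zero] at this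
      exact one_ne_zero this
    refine ⟨g, hgdvd, hgne, hgc0, ?_⟩
    rw [hp, Stmt5Aux.periodSet_eq hr hc ha hga hcop hgne hdeg, polyOrd]
  · rintro ⟨g, hgdvd, hgne, hgc0, ht⟩
    by_cases hdg0 : g.natDegree = 0
    · refine ⟨fun _ => 0, by simp, ?_⟩
      have hunit : IsUnit g := by
        rw [Polynomial.eq_C_of_natDegree_eq_zero hdg0]
        exact Polynomial.isUnit_C.mpr (isUnit_iff_ne_zero.mpr hgc0)
      have hL : sInf {p' : ℕ | 1 ≤ p' ∧ ∃ l : ℕ, ∀ n ≥ l,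
          (fun _ => (0 : F)) (n + p') = (fun _ => (0 : F)) n} = 1 :=
        Stmt5Aux.sInf_eq_one ⟨le_rfl, 0, fun _ _ => rfl⟩ (fun hmem => by exact Nat.not_succ_le_zero 0 hmem.1)
      have hR : polyOrd g = 1 := by
        rw [polyOrd]
        exact Stmt5Aux.sInf_eq_one ⟨le_rfl, hunit.dvd⟩ (fun hmem => by exact Nat.not_succ_le_zero 0 hmem.1)
      rw [ht, hR, hL]
    · have hgu : IsUnit ((g : F[X]) : PowerSeries F) :=
        PowerSeries.isUnit_iff_constantCoeff.mpr
          (by rw [Polynomial.constantCoeff_coe]; exact isUnit_iff_ne_zero.mpr hgc0)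
      obtain ⟨u, hu⟩ := hgu
      set a : ℕ → F := fun n => PowerSeries.coeff n ((u⁻¹ : (PowerSeries F)ˣ) : PowerSeries F)
        with hadef
      have hmk : PowerSeries.mk a = ((u⁻¹ : (PowerSeries F)ˣ) : PowerSeries F) := by
        ext m; rw [PowerSeries.coeff_mk]
      have hga : (g : PowerSeries F) * PowerSeries.mk a = ((1 : F[X]) : PowerSeries F) := by
        rw [hmk, Polynomial.coe_one, ← hu]
        exact u.mul_inv
      obtain ⟨w, hw⟩ := hgdvd
      have hwne : w ≠ 0 := by rintro rfl; rw [mul_zero] at hw; exact hfne hw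
      have hfa : (f : PowerSeries F) * PowerSeries.mk a = (w : PowerSeries F) := by
        rw [hw, Polynomial.coe_mul, mul_assoc, mul_comm ((w : F[X]) : PowerSeries F), ← mul_assoc,
          hga, Polynomial.coe_one, one_mul]
      have hwdeg : w.natDegree < r := by
        have e : r = g.natDegree + w.natDegree := by
          rw [← hfdeg, hw, Polynomial.natDegree_mul hgne hwne]
        omega
      have ha : ∀ n, a (n + r) = ∑ i ∈ Finset.range r, c i * a (n + r - 1 - i) := by
        intro n
        have h0 : PowerSeries.coeff (n + r) ((f : PowerSeries F) * PowerSeries.mk a) = 0 := by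
          rw [hfa, Polynomial.coeff_coe]
          exact Polynomial.coeff_eq_zero_of_natDegree_lt (by omega)
        have hthis := Stmt5Aux.coeff_f_mul r c a n
        rw [← hfdef] at hthis
        rw [h0] at hthis
        exact (sub_eq_zero.mp hthis.symm)
      refine ⟨a, ha, ?_⟩
      rw [ht, Stmt5Aux.periodSet_eq hr hc ha hga isCoprime_one_right hgne
        (Or.inr (by rw [Polynomial.natDegree_one]; omega)), polyOrd]
end

section
/- If g is an irreducible polynomial over GF(q) (q a power of the prime p) with g(0) ≠ 0 and order a, then for any integer b ≥ 1 the order of g^b equals a·p^t, where t is the smallest nonnegative integer with p^t ≥ b. -/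
open Polynomial

section aux
variable {F : Type*} [Field F]

lemma aux_dvd_mul {h : Polynomial F} {c : ℕ} (hd : h ∣ X ^ c - 1) (q : ℕ) :
    h ∣ X ^ (c * q) - 1 := by
  have : (X ^ c - 1 : Polynomial F) ∣ (X ^ c) ^ q - 1 ^ q := sub_dvd_pow_sub_pow _ _ _
  rw [one_pow, ← pow_mul] at this
  exact hd.trans this

lemma aux_ord_dvd {h : Polynomial F} (hne : {j : ℕ | 1 ≤ j ∧ h ∣ X ^ j - 1}.Nonempty)
    {n : ℕ} (hn : h ∣ X ^ n - 1) : polyOrd h ∣ n := by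
  obtain ⟨hc1, hcd⟩ : polyOrd h ∈ {j : ℕ | 1 ≤ j ∧ h ∣ X ^ j - 1} := Nat.sInf_mem hne
  set c := polyOrd h with hc
  have hdiv : h ∣ X ^ (c * (n / c)) - 1 := aux_dvd_mul hcd _
  have hr : h ∣ X ^ (n % c) - 1 := by
    have key : (X ^ n - 1 : Polynomial F) =
        X ^ (n % c) * (X ^ (c * (n / c)) - 1) + (X ^ (n % c) - 1) := by
      rw [mul_sub, mul_one, ← pow_add, Nat.add_comm, Nat.div_add_mod]
      ring
    rw [key] at hn
    exact (dvd_add_right (Dvd.dvd.mul_left hdiv _)).mp hn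
  by_contra hnd
  have hr0 : n % c ≠ 0 := fun h0 => hnd (Nat.dvd_of_mod_eq_zero h0)
  have hmem : n % c ∈ {j : ℕ | 1 ≤ j ∧ h ∣ X ^ j - 1} :=
    ⟨Nat.one_le_iff_ne_zero.mpr hr0, hr⟩
  have hle : c ≤ n % c := Nat.sInf_le hmem
  have hlt := Nat.mod_lt n (Nat.lt_of_lt_of_le Nat.zero_lt_one hc1)
  omega

end aux

/-- If `g` is irreducible over `GF(q)` (`q` a power of the prime `p`) with `g(0) ≠ 0` and
order `a`, then for any `b ≥ 1` the order of `g^b` is `a · p^t`, where `t` is the smallest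
nonnegative integer with `p^t ≥ b`. -/
theorem stmt_6 {F : Type*} [Field F] [Fintype F] (p : ℕ) [hp : Fact p.Prime] [CharP F p]
    (g : Polynomial F) (hg : Irreducible g) (hg0 : g.eval 0 ≠ 0)
    (A : ℕ) (hA : polyOrd g = A) (b : ℕ) (hb : 1 ≤ b)
    (t : ℕ) (ht : b ≤ p ^ t) (htmin : ∀ t' : ℕ, b ≤ p ^ t' → t ≤ t') :
    polyOrd (g ^ b) = A * p ^ t := by
  classical
  have hgX : ¬ g ∣ X := by
    rintro ⟨h, hh⟩
    have h0 : eval 0 g * eval 0 h = 0 := by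
      rw [← eval_mul, ← hh]; simp
    rcases mul_eq_zero.mp h0 with h1 | h1
    · exact hg0 h1
    · have : (X : Polynomial F) ∣ h := X_dvd_iff.mpr (by rwa [coeff_zero_eq_eval_zero])
      rcases this with ⟨k, hk⟩
      rw [hk, ← mul_assoc, mul_comm g X, mul_assoc] at hh
      have h1 : (X : Polynomial F) * 1 = X * (g * k) := by rw [mul_one]; exact hh
      have := mul_left_cancel₀ (X_ne_zero : (X : Polynomial F) ≠ 0) h1
      exact hg.not_isUnit (IsUnit.of_mul_eq_one _ this.symm)
  -- nonemptiness of the order set for g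
  haveI : Fact (Irreducible g) := ⟨hg⟩
  haveI : Module.Finite F (AdjoinRoot g) := (AdjoinRoot.powerBasis hg.ne_zero).finite
  haveI : Finite (AdjoinRoot g) := Module.finite_of_finite F
  haveI : Fintype (AdjoinRoot g) := Fintype.ofFinite _
  have hroot : AdjoinRoot.root g ≠ 0 := by
    intro h0
    have : AdjoinRoot.mk g X = 0 := by rw [AdjoinRoot.mk_X, h0]
    exact hgX (AdjoinRoot.mk_eq_zero.mp this)
  have hSg : {j : ℕ | 1 ≤ j ∧ g ∣ X ^ j - 1}.Nonempty := by
    refine ⟨Fintype.card (AdjoinRoot g) - 1, ?_, ?_⟩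
    · have : 1 < Fintype.card (AdjoinRoot g) := Fintype.one_lt_card
      omega
    · rw [← AdjoinRoot.mk_eq_zero]
      simp only [map_sub, map_pow, map_one, AdjoinRoot.mk_X]
      rw [FiniteField.pow_card_sub_one_eq_one _ hroot, sub_self]
  obtain ⟨ha1, had⟩ : polyOrd g ∈ {j : ℕ | 1 ≤ j ∧ g ∣ X ^ j - 1} := Nat.sInf_mem hSg
  set a := polyOrd g with haa
  -- p does not divide a
  have hpa : ¬ p ∣ a := by
    rintro ⟨a', ha'⟩
    have ha'1 : 1 ≤ a' := by
      rcases Nat.eq_zero_or_pos a' with h0 | h0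
      · subst h0; simp at ha'; omega
      · exact h0
    have : (X : Polynomial F) ^ a - 1 = (X ^ a' - 1) ^ p := by
      rw [sub_pow_char, one_pow, ← pow_mul, Nat.mul_comm, ← ha']
    rw [this] at had
    have hga' : g ∣ X ^ a' - 1 := (hg.prime.dvd_of_dvd_pow had)
    have hmem : a' ∈ {j : ℕ | 1 ≤ j ∧ g ∣ X ^ j - 1} := ⟨ha'1, hga'⟩
    have hle : a ≤ a' := Nat.sInf_le hmem
    have hp2 : 2 ≤ p := hp.out.two_le
    nlinarith
  -- X^a - 1 squarefree
  have hsep : (X ^ a - 1 : Polynomial F).Separable := by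
    rw [X_pow_sub_one_separable_iff]
    intro h0
    exact hpa ((CharP.cast_eq_zero_iff F p a).mp h0)
  have hsf : Squarefree (X ^ a - 1 : Polynomial F) := hsep.squarefree
  -- write X^a - 1 = g * m with ¬ g ∣ m
  obtain ⟨m, hm⟩ := had
  have hgm : ¬ g ∣ m := by
    rintro ⟨k, hk⟩
    rw [hk, ← mul_assoc] at hm
    exact hg.not_isUnit (hsf g (Dvd.intro _ hm.symm))
  -- frobenius identity
  have hfrob : ∀ s : ℕ, (X : Polynomial F) ^ (a * p ^ s) - 1 = (X ^ a - 1) ^ p ^ s := by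
    intro s
    rw [sub_pow_char_pow, one_pow, ← pow_mul]
  -- g^b divides X^(a p^t) - 1
  have hdvdt : g ^ b ∣ X ^ (a * p ^ t) - 1 := by
    rw [hfrob t, hm, mul_pow]
    exact dvd_mul_of_dvd_left (pow_dvd_pow g ht) _
  have hSgb : {j : ℕ | 1 ≤ j ∧ g ^ b ∣ X ^ j - 1}.Nonempty := by
    refine ⟨a * p ^ t, ?_, hdvdt⟩
    have : 1 ≤ p ^ t := Nat.one_le_pow _ _ hp.out.pos
    exact Nat.one_le_iff_ne_zero.mpr (by positivity)
  obtain ⟨hc1, hcd⟩ : polyOrd (g ^ b) ∈ {j : ℕ | 1 ≤ j ∧ g ^ b ∣ X ^ j - 1} :=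
    Nat.sInf_mem hSgb
  set c := polyOrd (g ^ b) with hcc
  -- c ∣ a * p^t
  have hcdvd : c ∣ a * p ^ t := aux_ord_dvd hSgb hdvdt
  -- a ∣ c
  have hgc : g ∣ X ^ c - 1 := (dvd_pow_self g (Nat.one_le_iff_ne_zero.mp hb)).trans hcd
  have hac : a ∣ c := aux_ord_dvd hSg hgc
  -- c = a * p^s for some s ≤ t
  obtain ⟨k, hk⟩ := hac
  have ha0 : a ≠ 0 := Nat.one_le_iff_ne_zero.mp ha1
  have hkdvd : k ∣ p ^ t := by
    have : a * k ∣ a * p ^ t := hk ▸ hcdvd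
    exact (mul_dvd_mul_iff_left ha0).mp this
  obtain ⟨s, hs, hks⟩ := (Nat.dvd_prime_pow hp.out).mp hkdvd
  -- from g^b ∣ (X^a-1)^(p^s), conclude b ≤ p^s
  have hcb : g ^ b ∣ (X ^ a - 1 : Polynomial F) ^ p ^ s := by
    rw [← hfrob s, ← hks, ← hk]
    exact hcd
  have hbs : b ≤ p ^ s := by
    by_contra hcon
    push_neg at hcon
    rw [hm, mul_pow] at hcb
    have h1 : g ^ (p ^ s + 1) ∣ g ^ p ^ s * m ^ p ^ s := (pow_dvd_pow g hcon).trans hcb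
    rw [pow_succ] at h1
    have hgp : (g : Polynomial F) ^ p ^ s ≠ 0 := pow_ne_zero _ hg.ne_zero
    have h2 : g ∣ m ^ p ^ s := (mul_dvd_mul_iff_left hgp).mp h1
    exact hgm (hg.prime.dvd_of_dvd_pow h2)
  have hst : t ≤ s := htmin s hbs
  have hseq : s = t := le_antisymm hs hst
  rw [← hA, hk, hks, hseq]
end

section
/- Suppose gcd(T, q) = 1 and f over GF(q) with f(0) = 1 is biperiodic with biperiod T (every sequence generated by the recurrence with characteristic polynomial f has least period either 1 or T, and some sequence has period T). Then f is squarefree apart from possibly a single factor (1-x): f = (1-x)^{d_0}·g_1···g_l with d_0 ∈ {0,1}, the g_i distinct irreducible polynomials each of order T, and Π g_i(0) = 1. -/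
open Polynomial

open AdjoinRoot in
lemma polyOrd_spec {F : Type*} [Field F] [Finite F] {h : Polynomial F} (hh : h ≠ 0)
    (h0 : h.eval 0 ≠ 0) : 1 ≤ polyOrd h ∧ h ∣ X ^ polyOrd h - 1 := by
  have hset : {j : ℕ | 1 ≤ j ∧ h ∣ X ^ j - 1}.Nonempty := by
    have hXd : ¬ (X : Polynomial F) ∣ h := by
      rw [Polynomial.X_dvd_iff, Polynomial.coeff_zero_eq_eval_zero]; exact h0
    obtain ⟨u, v, huv⟩ := (Polynomial.irreducible_X (R := F)).coprime_iff_not_dvd.mpr hXd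
    have hunit : IsUnit (root h) := by
      have h1 : (mk h) (u * X) + (mk h) (v * h) = 1 := by rw [← map_add, huv, map_one]
      rw [map_mul, map_mul, mk_self, mul_zero, add_zero, mk_X] at h1
      exact IsUnit.of_mul_eq_one _ ((mul_comm _ _).trans h1)
    have : Module.Finite F (AdjoinRoot h) := Module.Finite.of_basis (AdjoinRoot.powerBasis hh).basis
    have : Finite (AdjoinRoot h) := Module.finite_of_finite F
    obtain ⟨a, b, hab, heq⟩ := Finite.exists_ne_map_eq_of_infinite (fun n : ℕ => root h ^ n)
    wlog hlt : a < b generalizing a b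
    · exact this b a hab.symm heq.symm (by omega)
    have hpow : root h ^ (b - a) = 1 := by
      refine ((hunit.pow a).mul_left_cancel (b := root h ^ (b - a)) (c := (1 : AdjoinRoot h)) ?_)
      rw [mul_one, ← pow_add]
      have hba : a + (b - a) = b := by omega
      rw [hba]; exact heq.symm
    refine ⟨b - a, by omega, mk_eq_zero.mp ?_⟩
    rw [map_sub, map_pow, mk_X, map_one, hpow, sub_self]
  exact Nat.sInf_mem hset


open AdjoinRoot in
lemma exists_seq {F : Type*} [Field F] [Finite F] (r : ℕ) (hr : 0 < r) (c : ℕ → F)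
    {h : Polynomial F} (hmon : h.Monic) (hd : 1 ≤ h.natDegree)
    (hdvd : h ∣ (1 - ∑ i ∈ Finset.range r, C (c i) * X ^ (i + 1) : Polynomial F))
    (h0 : h.eval 0 ≠ 0) :
    ∃ a : ℕ → F,
      (∀ n : ℕ, a (n + r) = ∑ i ∈ Finset.range r, c i * a (n + r - 1 - i)) ∧
      sInf {p' : ℕ | 1 ≤ p' ∧ ∃ l : ℕ, ∀ n ≥ l, a (n + p') = a n} = polyOrd h := by
  classical
  have hh : h ≠ 0 := hmon.ne_zero
  set d := h.natDegree with hdw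
  obtain ⟨he1, hedvd⟩ := polyOrd_spec hh h0
  set e := polyOrd h with hew
  set φ : AdjoinRoot h → F := fun z => (AdjoinRoot.modByMonicHom hmon z).coeff (d - 1) with hφ
  have hφsub : ∀ z w, φ (z - w) = φ z - φ w := by
    intro z w; simp only [hφ, map_sub, Polynomial.coeff_sub]
  have hφsum : ∀ (s : Finset ℕ) (k : ℕ → F) (v : ℕ → AdjoinRoot h),
      φ (∑ i ∈ s, k i • v i) = ∑ i ∈ s, k i * φ (v i) := by
    intro s k v
    simp only [hφ, map_sum, map_smul, Polynomial.finset_sum_coeff, Polynomial.coeff_smul,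
      smul_eq_mul]
  -- the key nonvanishing property
  have key : ∀ z : AdjoinRoot h, z ≠ 0 → ∃ t : AdjoinRoot h, φ (t * z) ≠ 0 := by
    intro z hz
    obtain ⟨p, rfl⟩ := AdjoinRoot.mk_surjective z
    have hzp' : AdjoinRoot.mk h (p %ₘ h) = AdjoinRoot.mk h p := by
      have := AdjoinRoot.mk_leftInverse hmon (AdjoinRoot.mk h p)
      rwa [AdjoinRoot.modByMonicHom_mk] at this
    have hp'0 : p %ₘ h ≠ 0 := by
      intro h0'
      rw [← hzp', h0', map_zero] at hz; exact hz rfl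
    have hdeg : (p %ₘ h).degree < h.degree := Polynomial.degree_modByMonic_lt p hmon
    set m := (p %ₘ h).natDegree with hmw
    have hm : m < d := Polynomial.natDegree_lt_natDegree hp'0 hdeg
    refine ⟨AdjoinRoot.mk h (X ^ (d - 1 - m)), ?_⟩
    rw [← hzp', ← map_mul]
    have hmul0 : (X ^ (d - 1 - m) * (p %ₘ h)) ≠ 0 := by
      exact mul_ne_zero (pow_ne_zero _ Polynomial.X_ne_zero) hp'0
    have hmdeg : (X ^ (d - 1 - m) * (p %ₘ h)).natDegree = d - 1 := by
      rw [Polynomial.natDegree_mul (pow_ne_zero _ Polynomial.X_ne_zero) hp'0,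
        Polynomial.natDegree_X_pow]
      omega
    have hself : (X ^ (d - 1 - m) * (p %ₘ h)) %ₘ h = X ^ (d - 1 - m) * (p %ₘ h) := by
      rw [Polynomial.modByMonic_eq_self_iff hmon]
      refine lt_of_le_of_lt Polynomial.degree_le_natDegree ?_
      rw [hmdeg, Polynomial.degree_eq_natDegree hh]
      exact_mod_cast (by omega : d - 1 < d)
    simp only [hφ, AdjoinRoot.modByMonicHom_mk, hself]
    set k := d - 1 - m with hk
    have hix : d - 1 = m + k := by omega
    rw [hix, Polynomial.coeff_X_pow_mul]
    exact mt Polynomial.leadingCoeff_eq_zero.mp hp'0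
  -- root powers
  have hroote : root h ^ e = 1 := by
    have h1 : AdjoinRoot.mk h (X ^ e - 1) = 0 := AdjoinRoot.mk_eq_zero.mpr hedvd
    rw [map_sub, map_pow, mk_X, map_one, sub_eq_zero] at h1
    exact h1
  set y : AdjoinRoot h := root h ^ (e - 1) with hy
  have hxy : root h * y = 1 := by
    rw [hy, ← pow_succ']
    have : e - 1 + 1 = e := by omega
    rw [this, hroote]
  have hxyk : ∀ k : ℕ, root h ^ k * y ^ k = 1 := by
    intro k; rw [← mul_pow, hxy, one_pow]
  have hye : y ^ e = 1 := by
    rw [hy, ← pow_mul, mul_comm, pow_mul, hroote, one_pow]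
  have hinv : ∀ j m : ℕ, e ∣ (m + j) → y ^ m = root h ^ j := by
    intro j m ⟨t, ht⟩
    have hrmj : root h ^ m * root h ^ j = 1 := by
      rw [← pow_add, ht, pow_mul, hroote, one_pow]
    calc y ^ m = y ^ m * (root h ^ m * root h ^ j) := by rw [hrmj, mul_one]
      _ = (root h ^ m * y ^ m) * root h ^ j := by ring
      _ = root h ^ j := by rw [hxyk, one_mul]
  -- the sum identity
  have hS : (∑ i ∈ Finset.range r, c i • root h ^ (i + 1)) = 1 := by
    have h1 : AdjoinRoot.mk h (1 - ∑ i ∈ Finset.range r, C (c i) * X ^ (i + 1)) = 0 :=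
      AdjoinRoot.mk_eq_zero.mpr hdvd
    rw [map_sub, map_one, map_sum, sub_eq_zero] at h1
    rw [h1]
    refine Finset.sum_congr rfl fun i _ => ?_
    rw [map_mul, map_pow, mk_X, AdjoinRoot.mk_C, Algebra.smul_def]
    rfl
  refine ⟨fun n => φ (y ^ n), ?_, ?_⟩
  · intro n
    have hterm : ∀ i ∈ Finset.range r, c i * φ (y ^ (n + r - 1 - i))
        = c i * φ (root h ^ (i + 1) * y ^ (n + r)) := by
      intro i hi
      rw [Finset.mem_range] at hi
      have hsplit : (i + 1) + (n + r - 1 - i) = n + r := by omega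
      have hid : root h ^ (i + 1) * y ^ (n + r) = y ^ (n + r - 1 - i) :=
        calc root h ^ (i + 1) * y ^ (n + r)
            = root h ^ (i + 1) * (y ^ (i + 1) * y ^ (n + r - 1 - i)) := by
              rw [← pow_add, hsplit]
          _ = (root h ^ (i + 1) * y ^ (i + 1)) * y ^ (n + r - 1 - i) := by ring
          _ = y ^ (n + r - 1 - i) := by rw [hxyk, one_mul]
      rw [← hid]
    rw [Finset.sum_congr rfl hterm, ← hφsum]
    have : (∑ i ∈ Finset.range r, c i • (root h ^ (i + 1) * y ^ (n + r)))
        = (∑ i ∈ Finset.range r, c i • root h ^ (i + 1)) * y ^ (n + r) := by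
      rw [Finset.sum_mul]
      exact Finset.sum_congr rfl fun i _ => (smul_mul_assoc _ _ _).symm
    rw [this, hS, one_mul]
  · -- least period computation
    set Sa := {p' : ℕ | 1 ≤ p' ∧ ∃ l : ℕ, ∀ n ≥ l, φ (y ^ (n + p')) = φ (y ^ n)} with hSa
    have heS : e ∈ Sa := by
      refine ⟨he1, 0, fun n _ => ?_⟩
      rw [pow_add, hye, mul_one]
    have hlow : ∀ p ∈ Sa, e ≤ p := by
      rintro p ⟨hp1, l, hl⟩
      have hdvdp : h ∣ X ^ p - 1 := by
        rw [← AdjoinRoot.mk_eq_zero, map_sub, map_pow, mk_X, map_one, sub_eq_zero]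
        by_contra hw
        have hw' : root h ^ p - 1 ≠ 0 := sub_ne_zero.mpr hw
        obtain ⟨t, ht⟩ := key _ hw'
        apply ht
        obtain ⟨s, rfl⟩ := AdjoinRoot.mk_surjective t
        have hclaim : ∀ j : ℕ, φ (root h ^ j * (root h ^ p - 1)) = 0 := by
          intro j
          have hEj : l + p + j ≤ e * (l + p + j) := Nat.le_mul_of_pos_left _ (by omega)
          set m := e * (l + p + j) - j with hm
          have hm1 : e ∣ m + j := ⟨l + p + j, by omega⟩
          have hm2 : l + p ≤ m := by omega
          have hym : y ^ m = root h ^ j := hinv j m hm1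
          have hypr : y ^ m * root h ^ p = y ^ (m - p) := by
            have hmp' : m - p + p = m := by omega
            calc y ^ m * root h ^ p = (y ^ (m - p) * y ^ p) * root h ^ p := by
                  rw [← pow_add, hmp']
              _ = y ^ (m - p) * (root h ^ p * y ^ p) := by ring
              _ = y ^ (m - p) := by rw [hxyk, mul_one]
          rw [← hym, mul_sub, mul_one, hypr, hφsub]
          have := hl (m - p) (by omega)
          have hmp : m - p + p = m := by omega
          rw [hmp] at this
          rw [this, sub_self]
        -- expand s
        have hsrep : AdjoinRoot.mk h s =
            ∑ j ∈ Finset.range (s.natDegree + 1), s.coeff j • root h ^ j := by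
          conv_lhs => rw [s.as_sum_range' (s.natDegree + 1) (Nat.lt_succ_self _)]
          rw [map_sum]
          refine Finset.sum_congr rfl fun j _ => ?_
          rw [← Polynomial.C_mul_X_pow_eq_monomial, map_mul, map_pow, mk_X, AdjoinRoot.mk_C,
            Algebra.smul_def]
          rfl
        rw [hsrep, Finset.sum_mul]
        have : ∀ j ∈ Finset.range (s.natDegree + 1),
            (s.coeff j • root h ^ j) * (root h ^ p - 1)
              = s.coeff j • (root h ^ j * (root h ^ p - 1)) := by
          intro j _; rw [smul_mul_assoc]
        rw [Finset.sum_congr rfl this, hφsum]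
        exact Finset.sum_eq_zero fun j _ => by rw [hclaim j, mul_zero]
      exact Nat.sInf_le ⟨hp1, hdvdp⟩
    exact le_antisymm (Nat.sInf_le heS) (hlow _ (Nat.sInf_mem ⟨e, heS⟩))


/-- Structure of biperiodic characteristic polynomials when `gcd(T, q) = 1`: if every
sequence generated by the recurrence with characteristic polynomial
`f = 1 - ∑_{i=1}^r c_i x^i` has least period `1` or `T` (and both occur), then
`f = (1-x)^{d₀} · g₁ ⋯ g_l` with `d₀ ∈ {0,1}`, the `g_i` distinct irreducible polynomials
each of order `T`, and `∏ g_i(0) = 1`.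

Indexing convention: `a 0, …, a (r-1)` encode the initial state and `c i` denotes the
paper's `c_{i+1}`. -/
theorem stmt_10 {F : Type*} [Field F] [Fintype F] (q : ℕ) (hq : q = Fintype.card F)
    (r : ℕ) (hr : 0 < r) (c : ℕ → F) (hc : c (r - 1) ≠ 0)
    (T : ℕ) (hT : 2 ≤ T) (hcop : Nat.Coprime T q)
    (hbi : {p : ℕ | ∃ a : ℕ → F,
        (∀ n : ℕ, a (n + r) = ∑ i ∈ Finset.range r, c i * a (n + r - 1 - i)) ∧
        p = sInf {p' : ℕ | 1 ≤ p' ∧ ∃ l : ℕ, ∀ n ≥ l, a (n + p') = a n}} = {1, T}) :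
    ∃ (d₀ l : ℕ) (g : Fin l → Polynomial F),
      d₀ ≤ 1 ∧
      (1 - ∑ i ∈ Finset.range r, C (c i) * X ^ (i + 1) : Polynomial F) =
        (1 - X) ^ d₀ * ∏ i : Fin l, g i ∧
      (∀ i : Fin l, Irreducible (g i)) ∧
      Function.Injective g ∧
      (∀ i : Fin l, polyOrd (g i) = T) ∧
      (∏ i : Fin l, (g i).eval 0) = 1 := by
  classical
  set f : Polynomial F := 1 - ∑ i ∈ Finset.range r, C (c i) * X ^ (i + 1) with hfdef
  -- basic facts about f
  have hf0 : f.eval 0 = 1 := by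
    simp [hfdef, eval_finset_sum]
  have hfz : f ≠ 0 := fun hh => by simp [hh] at hf0
  have hdvd_eval : ∀ h' : Polynomial F, h' ∣ f → h'.eval 0 ≠ 0 := by
    rintro h' ⟨k, hk⟩ hev
    rw [hk, eval_mul, hev, zero_mul] at hf0
    exact one_ne_zero hf0.symm
  -- squarefreeness of X^T - 1
  have hTF : (T : F) ≠ 0 := by
    intro hT0
    have hPdvdT : ringChar F ∣ T := (CharP.cast_eq_zero_iff F (ringChar F) T).mp hT0
    obtain ⟨n, hprime, hcard⟩ := FiniteField.card F (ringChar F)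
    have hPdvdq : ringChar F ∣ q := by
      rw [hq, hcard]; exact dvd_pow_self _ (by exact_mod_cast n.ne_zero)
    have h1 : ringChar F = 1 := Nat.dvd_one.mp (hcop ▸ Nat.dvd_gcd hPdvdT hPdvdq)
    exact hprime.one_lt.ne' h1
  have hsq : Squarefree (X ^ T - 1 : Polynomial F) := by
    have := (Polynomial.separable_X_pow_sub_C (1 : F) hTF one_ne_zero).squarefree
    simpa using this
  have hXT : (X ^ T - 1 : Polynomial F) ≠ 0 := hsq.ne_zero
  -- order of any nonconstant monic divisor of f
  have ordA : ∀ h' : Polynomial F, h'.Monic → 1 ≤ h'.natDegree → h' ∣ f →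
      polyOrd h' = 1 ∨ polyOrd h' = T := by
    intro h' hm hd hdv
    obtain ⟨a, ha1, ha2⟩ := exists_seq r hr c hm hd hdv (hdvd_eval h' hdv)
    have hmem : polyOrd h' ∈ {p : ℕ | ∃ a : ℕ → F,
        (∀ n : ℕ, a (n + r) = ∑ i ∈ Finset.range r, c i * a (n + r - 1 - i)) ∧
        p = sInf {p' : ℕ | 1 ≤ p' ∧ ∃ l : ℕ, ∀ n ≥ l, a (n + p') = a n}} :=
      ⟨a, ha1, ha2.symm⟩
    rw [hbi] at hmem
    simpa using hmem
  -- factorization setup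
  set M := UniqueFactorizationMonoid.normalizedFactors f with hM
  have hMirr : ∀ p ∈ M, Irreducible p := fun p hp =>
    UniqueFactorizationMonoid.irreducible_of_normalized_factor p hp
  have hMmonic : ∀ p ∈ M, p.Monic := by
    intro p hp
    have h1 := UniqueFactorizationMonoid.normalize_normalized_factor p hp
    have h2 : p ≠ 0 := (hMirr p hp).ne_zero
    have := Polynomial.monic_normalize h2
    rwa [h1] at this
  have hMassoc : Associated M.prod f := UniqueFactorizationMonoid.prod_normalizedFactors hfz
  have hMdvd : ∀ p ∈ M, p ∣ f := fun p hp => (Multiset.dvd_prod hp).trans hMassoc.dvd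
  have hMdeg : ∀ p ∈ M, 1 ≤ p.natDegree := fun p hp => (hMirr p hp).natDegree_pos
  -- counts are at most one
  have hcount : ∀ p : Polynomial F, M.count p ≤ 1 := by
    intro p
    by_cases hp : p ∈ M
    · by_contra hc
      push_neg at hc
      have hple : Multiset.replicate 2 p ≤ M := by
        rw [Multiset.le_iff_count]
        intro a
        rcases eq_or_ne a p with rfl | hne
        · rw [Multiset.count_replicate_self]; omega
        · rw [Multiset.count_replicate]
          split_ifs with hcond
          · exact absurd rfl (by first | exact hcond ▸ hne | exact hcond ▸ hne.symm)
          · exact Nat.zero_le _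
      have hp2 : p ^ 2 ∣ f := by
        have := Multiset.prod_dvd_prod_of_le hple
        rw [Multiset.prod_replicate] at this
        exact this.trans hMassoc.dvd
      have hp2m : (p ^ 2).Monic := (hMmonic p hp).pow 2
      have hp2d : 1 ≤ (p ^ 2).natDegree := by
        rw [Polynomial.natDegree_pow]
        have := hMdeg p hp; omega
      obtain ⟨-, hdvd2⟩ := polyOrd_spec (hp2m.ne_zero) (hdvd_eval _ hp2)
      rcases ordA _ hp2m hp2d hp2 with h1 | hTT
      · rw [h1, pow_one] at hdvd2
        have := Polynomial.natDegree_le_of_dvd hdvd2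
          (by simpa using Polynomial.X_sub_C_ne_zero (1 : F))
        rw [Polynomial.natDegree_pow] at this
        have h2 : (X - 1 : Polynomial F).natDegree = 1 := by
          simpa using Polynomial.natDegree_X_sub_C (1 : F)
        rw [h2] at this
        have := hMdeg p hp; omega
      · rw [hTT] at hdvd2
        exact (hMirr p hp).not_isUnit (hsq p (by rwa [← sq]))
    · rw [Multiset.count_eq_zero_of_notMem hp]; omega
  set d₀ := M.count (X - 1 : Polynomial F) with hd₀
  set M₁ := M.filter (fun p => ¬ p = (X - 1 : Polynomial F)) with hM₁
  have hMsplit : M = Multiset.replicate d₀ (X - 1 : Polynomial F) + M₁ := by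
    conv_lhs => rw [← Multiset.filter_add_not (fun p => p = (X - 1 : Polynomial F)) M]
    congr 1
    rw [Multiset.filter_eq', hd₀]
  have hM₁sub : ∀ p ∈ M₁, p ∈ M ∧ p ≠ (X - 1 : Polynomial F) := by
    intro p hp
    rw [hM₁, Multiset.mem_filter] at hp
    exact ⟨hp.1, hp.2⟩
  have hordM₁ : ∀ p ∈ M₁, polyOrd p = T := by
    intro p hp
    obtain ⟨hpM, hpne⟩ := hM₁sub p hp
    rcases ordA p (hMmonic p hpM) (hMdeg p hpM) (hMdvd p hpM) with h1 | h2
    · exfalso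
      obtain ⟨-, hdvd1⟩ := polyOrd_spec (hMmonic p hpM).ne_zero (hdvd_eval _ (hMdvd p hpM))
      rw [h1, pow_one] at hdvd1
      have hXm1 : (X - 1 : Polynomial F) = X - C 1 := by rw [map_one]
      have hassoc : Associated p (X - 1 : Polynomial F) :=
        (hMirr p hpM).associated_of_dvd (hXm1 ▸ Polynomial.irreducible_X_sub_C (1 : F)) hdvd1
      exact hpne (Polynomial.eq_of_monic_of_associated (hMmonic p hpM)
        (hXm1 ▸ Polynomial.monic_X_sub_C (1 : F)) hassoc)
    · exact h2
  have hM₁nodup : M₁.Nodup := by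
    refine Multiset.Nodup.filter _ ?_
    rw [Multiset.nodup_iff_count_le_one]
    exact fun a => hcount a
  -- turn M₁ into a function on Fin l
  set L := M₁.toList with hL
  have hLnodup : L.Nodup := by
    have : (↑L : Multiset (Polynomial F)) = M₁ := Multiset.coe_toList M₁
    rw [← Multiset.coe_nodup, this]; exact hM₁nodup
  set l := L.length with hl
  set g' : Fin l → Polynomial F := fun i => L.get i with hg'
  have hg'inj : Function.Injective g' := List.nodup_iff_injective_get.mp hLnodup
  have hg'mem : ∀ i, g' i ∈ M₁ := by
    intro i
    have : g' i ∈ L := List.get_mem L i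
    rwa [← Multiset.mem_coe, Multiset.coe_toList] at this
  have hg'prod : (∏ i : Fin l, g' i) = M₁.prod := by
    rw [← Multiset.prod_toList]
    exact Fin.prod_univ_getElem L
  -- the unit
  obtain ⟨u, hu⟩ := hMassoc
  obtain ⟨k, hkunit, hCk⟩ := Polynomial.isUnit_iff.mp u.isUnit
  have hk0 : k ≠ 0 := hkunit.ne_zero
  have hfeq : f = (X - 1 : Polynomial F) ^ d₀ * M₁.prod * C k := by
    rw [← hu, ← hCk]
    congr 1
    rw [hMsplit, Multiset.prod_add, Multiset.prod_replicate]
  set u' : F := k * (-1) ^ d₀ with hu'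
  have hu'0 : u' ≠ 0 := by
    simp [hu', hk0]
  have hfeq2 : f = (1 - X : Polynomial F) ^ d₀ * (C u' * ∏ i : Fin l, g' i) := by
    rw [hfeq, hg'prod, hu']
    have : (X - 1 : Polynomial F) = (-1) * (1 - X) := by ring
    rw [this, mul_pow, map_mul, map_pow]
    simp only [map_neg, map_one]
    ring
  have hev1X : ((1 - X : Polynomial F) ^ d₀).eval 0 = 1 := by simp
  -- main case split
  by_cases hu1 : u' = 1
  · refine ⟨d₀, l, g', hcount _, ?_, ?_, hg'inj, ?_, ?_⟩
    · rw [hfeq2, hu1, map_one, one_mul]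
    · exact fun i => hMirr _ (hM₁sub _ (hg'mem i)).1
    · exact fun i => hordM₁ _ (hg'mem i)
    · have := hf0
      rw [hfeq2, hu1, map_one, one_mul, eval_mul, hev1X, one_mul, eval_prod] at this
      exact this
  · -- l must be positive
    have hlpos : 0 < l := by
      rcases Nat.eq_zero_or_pos l with h0 | h; swap
      · exact h
      exfalso
      haveI : IsEmpty (Fin l) := by rw [h0]; infer_instance
      rw [Finset.univ_eq_empty, Finset.prod_empty, mul_one] at hfeq2
      have := hf0
      rw [hfeq2, eval_mul, hev1X, one_mul, eval_C] at this
      exact hu1 this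
    set i0 : Fin l := ⟨0, hlpos⟩ with hi0
    set g : Fin l → Polynomial F := fun i => if i = i0 then C u' * g' i0 else g' i with hg
    have hgval : ∀ x : Fin l, x = i0 → g x = C u' * g' i0 := by
      intro x hx; simp only [hg]; simp [hx]
    have hgval' : ∀ x : Fin l, x ≠ i0 → g x = g' x := by
      intro x hx; simp only [hg]; simp [hx]
    have hCunit : IsUnit (C u' : Polynomial F) :=
      Polynomial.isUnit_C.mpr (isUnit_iff_ne_zero.mpr hu'0)
    have hgassoc : Associated (g' i0) (C u' * g' i0) := by
      refine ⟨hCunit.unit, ?_⟩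
      rw [IsUnit.unit_spec, mul_comm]
    have hmon : ∀ i, (g' i).Monic := fun i => hMmonic _ (hM₁sub _ (hg'mem i)).1
    have hgprod : (∏ i : Fin l, g i) = C u' * ∏ i : Fin l, g' i := by
      rw [← Finset.mul_prod_erase Finset.univ g (Finset.mem_univ i0),
        ← Finset.mul_prod_erase Finset.univ g' (Finset.mem_univ i0)]
      have h2 : ∀ i ∈ Finset.univ.erase i0, g i = g' i := by
        intro i hi
        exact hgval' i (Finset.mem_erase.mp hi).1
      rw [hgval i0 rfl, Finset.prod_congr rfl h2, mul_assoc]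
    refine ⟨d₀, l, g, hcount _, ?_, ?_, ?_, ?_, ?_⟩
    · rw [hfeq2, hgprod]
    · intro i
      by_cases hi : i = i0
      · rw [hgval i hi]
        exact hgassoc.irreducible (hMirr _ (hM₁sub _ (hg'mem i0)).1)
      · rw [hgval' i hi]
        exact hMirr _ (hM₁sub _ (hg'mem i)).1
    · -- injectivity
      intro i j hij
      by_cases hi : i = i0 <;> by_cases hj : j = i0
      · rw [hi, hj]
      · rw [hgval i hi, hgval' j hj] at hij
        have := congrArg Polynomial.leadingCoeff hij
        rw [Polynomial.leadingCoeff_mul, Polynomial.leadingCoeff_C, (hmon i0).leadingCoeff,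
          (hmon j).leadingCoeff, mul_one] at this
        exact absurd this hu1
      · rw [hgval j hj, hgval' i hi] at hij
        have := congrArg Polynomial.leadingCoeff hij.symm
        rw [Polynomial.leadingCoeff_mul, Polynomial.leadingCoeff_C, (hmon i0).leadingCoeff,
          (hmon i).leadingCoeff, mul_one] at this
        exact absurd this hu1
      · rw [hgval' i hi, hgval' j hj] at hij
        exact hg'inj hij
    · intro i
      by_cases hi : i = i0
      · rw [hgval i hi]
        have hiff : ∀ b : Polynomial F, C u' * g' i0 ∣ b ↔ g' i0 ∣ b :=
          fun b => hCunit.mul_left_dvd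
        have hords : polyOrd (C u' * g' i0) = polyOrd (g' i0) := by
          unfold polyOrd
          congr 1
          ext j
          simp only [Set.mem_setOf_eq, hiff]
        rw [hords]
        exact hordM₁ _ (hg'mem i0)
      · rw [hgval' i hi]
        exact hordM₁ _ (hg'mem i)
    · have := hf0
      rw [hfeq2, ← hgprod, eval_mul, hev1X, one_mul, eval_prod] at this
      exact this
end

section
/- Suppose gcd(T, q) = 1, T ≥ 2, and f over GF(q) of degree r with f(0) = 1 has period set {1, T}, with f = (1-x)^{d_0}·g_1···g_l as in the structure theorem. Then the q^r states decompose into cycles under the recurrence transition map as follows: there are N = (q^r - q^{d_0})/T cycles of length T and q^{d_0} fixed points (cycles of length 1). -/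
open Polynomial

/-- The period set of `f`: the orders of all nonzero divisors of `f` with nonzero
constant term. -/
noncomputable def periodSet {F : Type*} [Field F] (f : Polynomial F) : Set ℕ :=
  {t : ℕ | ∃ g : Polynomial F, g ∣ f ∧ g ≠ 0 ∧ g.coeff 0 ≠ 0 ∧ t = polyOrd g}

/-- The transition map of the linear recurrence. -/
def nextState {F : Type*} [Field F] {r : ℕ} (c : ℕ → F) (s : Fin r → F) : Fin r → F :=
  fun j => if h : (j : ℕ) + 1 < r then s ⟨(j : ℕ) + 1, h⟩
    else ∑ i ∈ Finset.range r, c i * s ⟨r - 1 - i, by have := j.isLt; omega⟩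

/-- The least period of a state `s` under the transition map. -/
noncomputable def stateCycleLen {F : Type*} [Field F] {r : ℕ} (c : ℕ → F)
    (s : Fin r → F) : ℕ :=
  sInf {k : ℕ | 1 ≤ k ∧ (nextState c)^[k] s = s}


/-- orbit-removal divisibility lemma -/
lemma my_card_dvd_aux {α : Type*} [DecidableEq α] (g : α → α) (T : ℕ) (hT : 0 < T) :
    ∀ (n : ℕ) (s : Finset α), s.card ≤ n → (∀ x ∈ s, g x ∈ s) →
    (∀ x ∈ s, g^[T] x = x) → (∀ x ∈ s, ∀ k, 0 < k → k < T → g^[k] x ≠ x) →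
    T ∣ s.card := by
  intro n
  induction n with
  | zero => intro s hs _ _ _; simp [Nat.le_zero.mp hs]
  | succ n ih =>
    intro s hcard hclosed hper hmin
    rcases Finset.eq_empty_or_nonempty s with rfl | ⟨x, hx⟩
    · simp
    have horb : ∀ k, g^[k] x ∈ s := by
      intro k; induction k with
      | zero => simpa using hx
      | succ k ihk => rw [Function.iterate_succ_apply']; exact hclosed _ ihk
    set O : Finset α := (Finset.range T).image (fun k => g^[k] x) with hO
    have hOsub : O ⊆ s := by
      intro y hy
      obtain ⟨k, _, rfl⟩ := Finset.mem_image.mp hy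
      exact horb k
    have key : ∀ i j, i < j → j < T → g^[i] x ≠ g^[j] x := by
      intro i j hlt hj hij
      have h1 : g^[T - j] (g^[j] x) = x := by
        rw [← Function.iterate_add_apply]
        rw [show T - j + j = T by omega]
        exact hper x hx
      have h2 : g^[T - j + i] x = x := by
        rw [Function.iterate_add_apply, hij]
        exact h1
      exact hmin x hx (T - j + i) (by omega) (by omega) h2
    have hinj : Set.InjOn (fun k => g^[k] x) (Finset.range T) := by
      intro i hi j hj hij
      simp only [Finset.coe_range, Set.mem_Iio] at hi hj
      have hij' : g^[i] x = g^[j] x := hij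
      rcases lt_trichotomy i j with h | h | h
      · exact absurd hij' (key i j h hj)
      · exact h
      · exact absurd hij'.symm (key j i h hi)
    have hOcard : O.card = T := by
      rw [hO, Finset.card_image_of_injOn hinj, Finset.card_range]
    have hdiff : ∀ y ∈ s \ O, g y ∈ s \ O := by
      intro y hy
      rw [Finset.mem_sdiff] at hy
      rw [Finset.mem_sdiff]
      refine ⟨hclosed _ hy.1, ?_⟩
      intro hgy
      obtain ⟨k, hk, hgyk⟩ := Finset.mem_image.mp hgy
      rw [Finset.mem_range] at hk
      apply hy.2
      have hy' : g^[T - 1] (g y) = y := by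
        have h := hper y hy.1
        rwa [show T = T - 1 + 1 by omega, Function.iterate_succ_apply] at h
      rw [← hgyk, ← Function.iterate_add_apply] at hy'
      rcases Nat.eq_zero_or_pos k with rfl | hkpos
      · exact Finset.mem_image.mpr ⟨T - 1, Finset.mem_range.mpr (by omega), by simpa using hy'⟩
      · rw [show T - 1 + k = (k - 1) + T by omega, Function.iterate_add_apply, hper x hx] at hy'
        exact Finset.mem_image.mpr ⟨k - 1, Finset.mem_range.mpr (by omega), hy'⟩
    have hTle : T ≤ s.card := by
      rw [← hOcard]; exact Finset.card_le_card hOsub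
    have hsd : (s \ O).card = s.card - T := by rw [Finset.card_sdiff_of_subset hOsub, hOcard]
    have hdvd := ih (s \ O) (by omega)
      hdiff
      (fun y hy => hper y (Finset.mem_sdiff.mp hy).1)
      (fun y hy => hmin y (Finset.mem_sdiff.mp hy).1)
    rw [hsd] at hdvd
    obtain ⟨m, hm⟩ := hdvd
    exact ⟨m + 1, by rw [Nat.mul_add, Nat.mul_one]; omega⟩

lemma my_reverse_reverse {R : Type*} [Semiring R] (p : Polynomial R) (h : p.coeff 0 ≠ 0) :
    p.reverse.reverse = p := by
  have htd : p.natTrailingDegree = 0 := natTrailingDegree_eq_zero.mpr (Or.inr h)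
  have hd : p.reverse.natDegree = p.natDegree := by
    rw [reverse_natDegree, htd, Nat.sub_zero]
  ext n
  rw [coeff_reverse, hd, coeff_reverse, revAt_invol]


section polyfacts
variable {F : Type*} [Field F]

lemma coeff_sum_cX (c : ℕ → F) (r n : ℕ) :
    (∑ i ∈ Finset.range r, C (c i) * X ^ (i + 1)).coeff n
      = if 1 ≤ n ∧ n ≤ r then c (n - 1) else 0 := by
  rw [finset_sum_coeff]
  simp only [coeff_C_mul, coeff_X_pow]
  by_cases h : 1 ≤ n ∧ n ≤ r
  · rw [if_pos h]
    rw [Finset.sum_eq_single (n - 1)]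
    · rw [if_pos (by omega)]; ring
    · intro i _ hne; rw [if_neg (by omega), mul_zero]
    · intro hmem; exact absurd (Finset.mem_range.mpr (by omega)) hmem
  · rw [if_neg h]
    apply Finset.sum_eq_zero
    intro i hi
    rw [Finset.mem_range] at hi
    rw [if_neg (by omega), mul_zero]

lemma fpoly_coeff_zero (c : ℕ → F) (r : ℕ) :
    (1 - ∑ i ∈ Finset.range r, C (c i) * X ^ (i + 1)).coeff 0 = 1 := by
  rw [coeff_sub, coeff_one, coeff_sum_cX]
  simp

lemma fpoly_natDegree (c : ℕ → F) (r : ℕ) (hr : 0 < r) (hc : c (r - 1) ≠ 0) :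
    (1 - ∑ i ∈ Finset.range r, C (c i) * X ^ (i + 1)).natDegree = r := by
  apply le_antisymm
  · rw [natDegree_le_iff_coeff_eq_zero]
    intro N hN
    rw [coeff_sub, coeff_one, coeff_sum_cX]
    rw [if_neg (by omega), if_neg (by omega), sub_zero]
  · apply le_natDegree_of_ne_zero
    rw [coeff_sub, coeff_one, coeff_sum_cX, if_neg (by omega), if_pos (by omega)]
    simpa using hc

lemma reflect_sum {ι : Type*} (N : ℕ) (t : Finset ι) (f : ι → Polynomial F) :
    reflect N (∑ i ∈ t, f i) = ∑ i ∈ t, reflect N (f i) := by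
  induction t using Finset.cons_induction with
  | empty => simp
  | cons a t ha ih => rw [Finset.sum_cons, Finset.sum_cons, reflect_add, ih]

lemma reflect_sum_cX (c : ℕ → F) (r : ℕ) :
    reflect r (∑ i ∈ Finset.range r, C (c i) * X ^ (i + 1))
      = ∑ i ∈ Finset.range r, C (c i) * X ^ (r - 1 - i) := by
  rw [reflect_sum]
  apply Finset.sum_congr rfl
  intro i hi
  rw [Finset.mem_range] at hi
  rw [reflect_C_mul_X_pow, revAt_le (by omega : i + 1 ≤ r)]
  congr 2
  omega

lemma fpoly_reverse (c : ℕ → F) (r : ℕ) (hr : 0 < r) (hc : c (r - 1) ≠ 0) :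
    (1 - ∑ i ∈ Finset.range r, C (c i) * X ^ (i + 1)).reverse
      = X ^ r - ∑ i ∈ Finset.range r, C (c i) * X ^ (r - 1 - i) := by
  rw [reverse, fpoly_natDegree c r hr hc, reflect_sub, reflect_sum_cX]
  congr 1
  have : (1 : Polynomial F) = C 1 * X ^ 0 := by simp
  rw [this, reflect_C_mul_X_pow]
  simp [revAt_le (Nat.zero_le r)]

end polyfacts

/-- The sequence extension of a state. -/
noncomputable def seqext {F : Type*} [Field F] {r : ℕ} (c : ℕ → F) (s : Fin r → F) : ℕ → F :=
  fun n => if h : n < r then s ⟨n, h⟩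
    else ∑ i ∈ (Finset.range r).attach, c i.1 * seqext c s (n - 1 - i.1)
termination_by n => n
decreasing_by
  · have hi := Finset.mem_range.mp i.2
    omega

lemma seqext_lt {F : Type*} [Field F] {r : ℕ} (c : ℕ → F) (s : Fin r → F) (n : ℕ) (h : n < r) :
    seqext c s n = s ⟨n, h⟩ := by
  rw [seqext]; simp [h]

lemma seqext_ge {F : Type*} [Field F] {r : ℕ} (c : ℕ → F) (s : Fin r → F) (n : ℕ) (h : r ≤ n) :
    seqext c s n = ∑ i ∈ Finset.range r, c i * seqext c s (n - 1 - i) := by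
  rw [seqext]
  rw [dif_neg (by omega)]
  rw [← Finset.sum_attach (Finset.range r) (fun i => c i * seqext c s (n - 1 - i))]

/-- window formula -/
lemma iterate_nextState {F : Type*} [Field F] {r : ℕ} (c : ℕ → F) (s : Fin r → F) :
    ∀ (k : ℕ) (j : Fin r), (nextState c)^[k] s j = seqext c s (k + j) := by
  intro k
  induction k with
  | zero =>
    intro j
    rw [Function.iterate_zero_apply, Nat.zero_add, seqext_lt c s j j.isLt]
  | succ k ih =>
    intro j
    rw [Function.iterate_succ_apply', nextState]
    by_cases h : (j : ℕ) + 1 < r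
    · rw [dif_pos h, ih ⟨(j : ℕ) + 1, h⟩]
      congr 1
      simp; omega
    · rw [dif_neg h]
      have hj : (j : ℕ) = r - 1 := by have := j.isLt; omega
      have hr : 0 < r := by have := j.isLt; omega
      have htarget : seqext c s (k + 1 + (j : ℕ)) = ∑ i ∈ Finset.range r,
          c i * seqext c s (k + 1 + (j : ℕ) - 1 - i) :=
        seqext_ge c s _ (by omega)
      rw [htarget]
      apply Finset.sum_congr rfl
      intro i hi
      rw [Finset.mem_range] at hi
      rw [ih ⟨r - 1 - i, by omega⟩]
      have hcoe : ((⟨r - 1 - i, by omega⟩ : Fin r) : ℕ) = r - 1 - i := rfl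
      rw [hcoe]
      have : k + (r - 1 - i) = k + 1 + (j : ℕ) - 1 - i := by omega
      rw [this]

/-- nextState as a linear map -/
def Mlin {F : Type*} [Field F] {r : ℕ} (c : ℕ → F) : (Fin r → F) →ₗ[F] (Fin r → F) where
  toFun := nextState c
  map_add' := by
    intro s t
    funext j
    simp only [nextState, Pi.add_apply]
    split_ifs with h
    · rfl
    · rw [← Finset.sum_add_distrib]
      apply Finset.sum_congr rfl
      intro i _
      ring
  map_smul' := by
    intro a s
    funext j
    simp only [nextState, Pi.smul_apply, RingHom.id_apply, smul_eq_mul]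
    split_ifs with h
    · rfl
    · rw [Finset.mul_sum]
      apply Finset.sum_congr rfl
      intro i _
      ring

lemma Mlin_apply {F : Type*} [Field F] {r : ℕ} (c : ℕ → F) (s : Fin r → F) :
    Mlin c s = nextState c s := rfl

lemma Mlin_pow_apply {F : Type*} [Field F] {r : ℕ} (c : ℕ → F) (n : ℕ) (s : Fin r → F) :
    (Mlin c ^ n) s = (nextState c)^[n] s := by
  induction n with
  | zero => simp
  | succ n ih =>
    rw [pow_succ', Function.iterate_succ_apply', Module.End.mul_apply, ih, Mlin_apply]

lemma aeval_gpoly {F : Type*} [Field F] {r : ℕ} (c : ℕ → F) (hr : 0 < r) :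
    Polynomial.aeval (Mlin c : Module.End F (Fin r → F))
      (X ^ r - ∑ i ∈ Finset.range r, C (c i) * X ^ (r - 1 - i)) = 0 := by
  apply LinearMap.ext
  intro s
  rw [map_sub, map_pow, aeval_X, map_sum]
  simp only [map_mul, aeval_C, map_pow, aeval_X]
  rw [LinearMap.zero_apply, LinearMap.sub_apply, LinearMap.coe_sum, Finset.sum_apply]
  funext j
  rw [Pi.sub_apply, Pi.zero_apply, Finset.sum_apply]
  simp only [Module.End.mul_apply, Module.algebraMap_end_apply, Pi.smul_apply, smul_eq_mul,
    Mlin_pow_apply, iterate_nextState]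
  rw [seqext_ge c s (r + (j : ℕ)) (by omega), sub_eq_zero]
  apply Finset.sum_congr rfl
  intro i hi
  rw [Finset.mem_range] at hi
  have harg : r + (j : ℕ) - 1 - i = r - 1 - i + (j : ℕ) := by omega
  rw [harg]

/-- Cycle decomposition for a biperiodic recurrence: if `gcd(T, q) = 1`, `T ≥ 2`, and the
characteristic polynomial `f = 1 - ∑_{i=1}^r c_i x^i` has period set `{1, T}` with
`d₀ ∈ {0,1}` the multiplicity of `(1-x)` in `f`, then there are exactly `q^{d₀}` fixed
points, the remaining `q^r - q^{d₀}` states lie on cycles of length `T`, and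
`T ∣ q^r - q^{d₀}` (so there are `N = (q^r - q^{d₀})/T` cycles of length `T`). -/
theorem stmt_17 {F : Type*} [Field F] [Fintype F] (q : ℕ) (hq : q = Fintype.card F)
    (r : ℕ) (hr : 0 < r) (c : ℕ → F) (hc : c (r - 1) ≠ 0)
    (T : ℕ) (hT : 2 ≤ T) (hcop : Nat.Coprime T q)
    (hper : periodSet (1 - ∑ i ∈ Finset.range r, C (c i) * X ^ (i + 1)) = {1, T})
    (d₀ : ℕ) (hd₀ : d₀ ≤ 1)
    (hdvd : (1 - X : Polynomial F) ^ d₀ ∣ 1 - ∑ i ∈ Finset.range r, C (c i) * X ^ (i + 1))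
    (hndvd : ¬ (1 - X : Polynomial F) ^ (d₀ + 1) ∣
      1 - ∑ i ∈ Finset.range r, C (c i) * X ^ (i + 1)) :
    {s : Fin r → F | stateCycleLen c s = 1}.ncard = q ^ d₀ ∧
    {s : Fin r → F | stateCycleLen c s = T}.ncard = q ^ r - q ^ d₀ ∧
    T ∣ q ^ r - q ^ d₀ := by
  classical
  have hscl : ∀ s : Fin r → F,
      stateCycleLen c s = sInf {k : ℕ | 1 ≤ k ∧ (nextState c)^[k] s = s} := fun _ => rfl
  set f : Polynomial F := 1 - ∑ i ∈ Finset.range r, C (c i) * X ^ (i + 1) with hfdef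
  set g : Polynomial F := X ^ r - ∑ i ∈ Finset.range r, C (c i) * X ^ (r - 1 - i) with hgdef
  have hf0 : f.coeff 0 = 1 := fpoly_coeff_zero c r
  have hfne : f ≠ 0 := fun h => by simp [h] at hf0
  have hgrev : f.reverse = g := fpoly_reverse c r hr hc
  -- reverse of X^k - 1
  have hrev_pow : ∀ k : ℕ, 1 ≤ k → (X ^ k - 1 : Polynomial F).reverse = 1 - X ^ k := by
    intro k hk
    have h1 : (X ^ k - 1 : Polynomial F) = (1 : Polynomial F) * X ^ k + C (-1) := by
      rw [one_mul, map_neg, map_one]; ring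
    rw [h1, reverse_add_C, reverse_mul_X_pow]
    have h2 : reverse (1 : Polynomial F) = 1 := by rw [← C_1, reverse_C]
    rw [h2, one_mul, natDegree_X_pow, map_neg, map_one]
    ring
  have hXkne : ∀ k : ℕ, 1 ≤ k → (X ^ k - 1 : Polynomial F) ≠ 0 := by
    intro k hk h
    have : (X ^ k - 1 : Polynomial F).coeff 0 = 0 := by rw [h, coeff_zero]
    rw [coeff_sub, coeff_X_pow, if_neg (by omega), coeff_one, if_pos rfl] at this
    simp at this
  -- Step A : f ∣ X^T - 1
  have hdvd_of : ∀ (p : Polynomial F) (t : ℕ), 1 ≤ t →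
      sInf {j : ℕ | 1 ≤ j ∧ p ∣ X ^ j - 1} = t → p ∣ X ^ t - 1 := by
    intro p t ht hst
    have hne : {j : ℕ | 1 ≤ j ∧ p ∣ X ^ j - 1}.Nonempty := by
      by_contra h
      rw [Set.not_nonempty_iff_eq_empty] at h
      rw [h, Nat.sInf_empty] at hst
      omega
    have hm := Nat.sInf_mem hne
    rw [hst] at hm
    exact hm.2
  have hfdvdT : f ∣ X ^ T - 1 := by
    have hford : polyOrd f ∈ periodSet f := ⟨f, dvd_rfl, hfne,
      by rw [hf0]; exact one_ne_zero, rfl⟩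
    rw [hper] at hford
    simp only [Set.mem_insert_iff, Set.mem_singleton_iff] at hford
    rcases hford with h1 | hTT
    · have hdx : f ∣ X ^ 1 - 1 := hdvd_of f 1 le_rfl h1
      rw [pow_one] at hdx
      refine dvd_trans hdx ?_
      have := sub_dvd_pow_sub_pow (X : Polynomial F) 1 T
      simpa using this
    · exact hdvd_of f T (by omega) hTT
  -- Step B : nextState iterated T times is the identity
  have haevg := aeval_gpoly (F := F) (r := r) c hr
  rw [← hgdef] at haevg
  have hBT : ∀ s : Fin r → F, (nextState c)^[T] s = s := by
    have hgdvdT : g ∣ X ^ T - 1 := by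
      obtain ⟨h, hh⟩ := hfdvdT
      have h3 : (X ^ T - 1 : Polynomial F).reverse = f.reverse * h.reverse := by
        rw [hh, reverse_mul_of_domain]
      rw [hrev_pow T (by omega), hgrev] at h3
      exact ⟨-h.reverse, by rw [mul_neg, ← h3]; ring⟩
    obtain ⟨w, hw⟩ := hgdvdT
    have haev : Polynomial.aeval (Mlin c : Module.End F (Fin r → F)) ((X : Polynomial F) ^ T - 1) = 0 := by
      rw [hw, map_mul, haevg, zero_mul]
    intro s
    have h2 : (Polynomial.aeval (Mlin c : Module.End F (Fin r → F)) ((X : Polynomial F) ^ T - 1)) s = 0 := by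
      rw [haev]; rfl
    rw [map_sub, map_pow, aeval_X, map_one, LinearMap.sub_apply, Module.End.one_apply,
      Mlin_pow_apply] at h2
    exact sub_eq_zero.mp h2
  -- Step C : key minimality
  have hkey : ∀ (s : Fin r → F) (k : ℕ), 1 ≤ k → k < T →
      (nextState c)^[k] s = s → nextState c s = s := by
    intro s k hk1 hkT hiter
    set p := EuclideanDomain.gcd (X ^ k - 1 : Polynomial F) g with hpdef
    have hp1 : p ∣ X ^ k - 1 := EuclideanDomain.gcd_dvd_left _ _
    have hp2 : p ∣ g := EuclideanDomain.gcd_dvd_right _ _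
    have hpne : p ≠ 0 := by
      intro h0
      exact hXkne k hk1 ((EuclideanDomain.gcd_eq_zero_iff.mp (hpdef ▸ h0)).1)
    have hp0 : p.coeff 0 ≠ 0 := by
      obtain ⟨u, hu⟩ := hp1
      intro h0
      have hz : (X ^ k - 1 : Polynomial F).coeff 0 = 0 := by
        rw [hu, mul_coeff_zero, h0, zero_mul]
      rw [coeff_sub, coeff_X_pow, if_neg (by omega), coeff_one, if_pos rfl] at hz
      simp at hz
    have hq1 : p.reverse ∣ f := by
      obtain ⟨u, hu⟩ := hp2
      refine ⟨u.reverse, ?_⟩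
      have h3 : f.reverse.reverse = (p * u).reverse := by rw [← hu, hgrev]
      rw [my_reverse_reverse f (by rw [hf0]; exact one_ne_zero), reverse_mul_of_domain] at h3
      exact h3
    have hq2 : p.reverse ∣ X ^ k - 1 := by
      obtain ⟨u, hu⟩ := hp1
      have h3 : (X ^ k - 1 : Polynomial F).reverse = p.reverse * u.reverse := by
        rw [hu, reverse_mul_of_domain]
      rw [hrev_pow k hk1] at h3
      exact ⟨-u.reverse, by rw [mul_neg, ← h3]; ring⟩
    have hqne : p.reverse ≠ 0 := by rw [Ne, reverse_eq_zero]; exact hpne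
    have hq0 : (p.reverse).coeff 0 ≠ 0 := by
      rw [coeff_zero_reverse]
      exact leadingCoeff_ne_zero.mpr hpne
    have hmem : polyOrd p.reverse ∈ periodSet f := ⟨p.reverse, hq1, hqne, hq0, rfl⟩
    rw [hper] at hmem
    simp only [Set.mem_insert_iff, Set.mem_singleton_iff] at hmem
    have hle : polyOrd p.reverse ≤ k := Nat.sInf_le ⟨hk1, hq2⟩
    have hord1 : sInf {j : ℕ | 1 ≤ j ∧ p.reverse ∣ X ^ j - 1} = 1 := by
      rcases hmem with h | h
      · exact h
      · omega
    have hdvdX1 : p.reverse ∣ X - 1 := by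
      have hdx := hdvd_of p.reverse 1 le_rfl hord1
      rwa [pow_one] at hdx
    have hpdvd : p ∣ X - 1 := by
      obtain ⟨u, hu⟩ := hdvdX1
      have h3 : (X - 1 : Polynomial F).reverse = p.reverse.reverse * u.reverse := by
        rw [hu, reverse_mul_of_domain]
      rw [my_reverse_reverse p hp0] at h3
      have h4 : (X - 1 : Polynomial F).reverse = 1 - X := by
        have h5 := hrev_pow 1 le_rfl
        rwa [pow_one] at h5
      rw [h4] at h3
      exact ⟨-u.reverse, by rw [mul_neg, ← h3]; ring⟩
    have haevk : (Polynomial.aeval (Mlin c : Module.End F (Fin r → F)) ((X : Polynomial F) ^ k - 1)) s = 0 := by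
      rw [map_sub, map_pow, aeval_X, map_one, LinearMap.sub_apply, Module.End.one_apply,
        Mlin_pow_apply, hiter, sub_self]
    have haevp : (Polynomial.aeval (Mlin c : Module.End F (Fin r → F)) p) s = 0 := by
      have hbez := EuclideanDomain.gcd_eq_gcd_ab (X ^ k - 1 : Polynomial F) g
      rw [← hpdef] at hbez
      rw [hbez, mul_comm (X ^ k - 1 : Polynomial F) _, map_add, map_mul, map_mul, haevg,
        zero_mul, LinearMap.add_apply, LinearMap.zero_apply, add_zero, Module.End.mul_apply,
        haevk, map_zero]
    obtain ⟨w, hw⟩ := hpdvd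
    have hfin : (Polynomial.aeval (Mlin c : Module.End F (Fin r → F)) ((X : Polynomial F) - 1)) s = 0 := by
      rw [hw, mul_comm, map_mul, Module.End.mul_apply, haevp, map_zero]
    rw [map_sub, aeval_X, map_one, LinearMap.sub_apply, Module.End.one_apply] at hfin
    have hfin2 := sub_eq_zero.mp hfin
    rw [Mlin_apply] at hfin2
    exact hfin2
  -- Step D : cycle lengths
  have hlen1 : ∀ s : Fin r → F, nextState c s = s → stateCycleLen c s = 1 := by
    intro s hs
    apply le_antisymm
    · exact Nat.sInf_le ⟨le_refl 1, by simpa using hs⟩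
    · by_contra h
      have h0 : stateCycleLen c s = 0 := by omega
      have hne : {k : ℕ | 1 ≤ k ∧ (nextState c)^[k] s = s}.Nonempty :=
        ⟨1, le_refl 1, by simpa using hs⟩
      have := Nat.sInf_mem hne
      rw [hscl] at h0
      rw [h0] at this
      exact absurd this.1 (by omega)
  have hlen1' : ∀ s : Fin r → F, stateCycleLen c s = 1 → nextState c s = s := by
    intro s hs
    have hne : {k : ℕ | 1 ≤ k ∧ (nextState c)^[k] s = s}.Nonempty := by
      by_contra h
      rw [Set.not_nonempty_iff_eq_empty] at h
      rw [hscl, h, Nat.sInf_empty] at hs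
      exact one_ne_zero hs.symm
    have := Nat.sInf_mem hne
    rw [hscl] at hs
    rw [hs] at this
    simpa using this.2
  have hlenT : ∀ s : Fin r → F, nextState c s ≠ s → stateCycleLen c s = T := by
    intro s hs
    have hTm : T ∈ {k : ℕ | 1 ≤ k ∧ (nextState c)^[k] s = s} := ⟨by omega, hBT s⟩
    have hle : stateCycleLen c s ≤ T := Nat.sInf_le hTm
    have hmem := Nat.sInf_mem (Set.nonempty_of_mem hTm)
    rw [hscl] at hle ⊢
    rcases lt_or_eq_of_le hle with hlt | heq
    · exact absurd (hkey s _ hmem.1 hlt hmem.2) hs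
    · exact heq
  -- sum of c
  have heval1 : f.eval 1 = 1 - ∑ i ∈ Finset.range r, c i := by
    rw [hfdef, eval_sub, eval_one, eval_finset_sum]
    simp
  have hone_sub_dvd : ((1 - X : Polynomial F) ∣ f) ↔ f.eval 1 = 0 := by
    rw [show (1 - X : Polynomial F) = -(X - C 1) by rw [C_1]; ring, neg_dvd]
    exact dvd_iff_isRoot
  -- fixed points are constants
  have hfix_const : ∀ s : Fin r → F, nextState c s = s →
      ∀ j : Fin r, s j = s ⟨0, hr⟩ := by
    intro s hs
    have key : ∀ n (hnr : n < r), s ⟨n, hnr⟩ = s ⟨0, hr⟩ := by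
      intro n
      induction n with
      | zero => intro _; rfl
      | succ n ih =>
        intro hnr
        have hn : n < r := by omega
        have hstep := congrFun hs ⟨n, hn⟩
        simp only [nextState] at hstep
        rw [dif_pos (show (n : ℕ) + 1 < r from hnr)] at hstep
        rw [← ih hn]
        exact hstep
    exact fun j => key j.1 j.2
  have hconst_fix : ∀ β : F, (∑ i ∈ Finset.range r, c i) * β = β →
      nextState c (fun _ : Fin r => β) = (fun _ : Fin r => β) := by
    intro β hβ
    funext j
    simp only [nextState]
    split_ifs with h
    · rfl
    · rw [← Finset.sum_mul]
      exact hβ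
  have hlast : ∀ s : Fin r → F, nextState c s = s →
      (∑ i ∈ Finset.range r, c i) * s ⟨0, hr⟩ = s ⟨0, hr⟩ := by
    intro s hs
    have hstep := congrFun hs ⟨r - 1, by omega⟩
    simp only [nextState] at hstep
    rw [dif_neg (by simp; omega)] at hstep
    calc (∑ i ∈ Finset.range r, c i) * s ⟨0, hr⟩
        = ∑ i ∈ Finset.range r, c i * s ⟨0, hr⟩ := by rw [Finset.sum_mul]
      _ = ∑ i ∈ Finset.range r, c i * s ⟨r - 1 - i, by omega⟩ := by
          apply Finset.sum_congr rfl
          intro i _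
          rw [hfix_const s hs ⟨r - 1 - i, by omega⟩]
      _ = s ⟨r - 1, by omega⟩ := hstep
      _ = s ⟨0, hr⟩ := hfix_const s hs _
  -- the fixed point set
  have hcard1 : {s : Fin r → F | stateCycleLen c s = 1}.ncard = q ^ d₀ := by
    have hsetfix : {s : Fin r → F | stateCycleLen c s = 1} = {s | nextState c s = s} := by
      ext s
      simp only [Set.mem_setOf_eq]
      exact ⟨fun h => hlen1' s h, fun h => hlen1 s h⟩
    interval_cases d₀
    · have hf1 : f.eval 1 ≠ 0 := by
        intro h0
        apply hndvd
        rw [zero_add, pow_one]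
        exact hone_sub_dvd.mpr h0
      have hS : (∑ i ∈ Finset.range r, c i) ≠ 1 := by
        intro h1
        apply hf1
        rw [heval1, h1, sub_self]
      have hzero : {s : Fin r → F | nextState c s = s} = {(0 : Fin r → F)} := by
        ext s
        simp only [Set.mem_setOf_eq, Set.mem_singleton_iff]
        constructor
        · intro hs
          have hβ := hlast s hs
          have hβ0 : s ⟨0, hr⟩ = 0 := by
            by_contra hne
            exact hS (mul_right_cancel₀ hne (by rw [hβ, one_mul]))
          funext j
          rw [hfix_const s hs j, hβ0]
          rfl
        · rintro rfl
          have := hconst_fix 0 (by rw [mul_zero])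
          convert this using 1 <;> rfl
      rw [hsetfix, hzero, Set.ncard_singleton, pow_zero]
    · have hf1 : f.eval 1 = 0 := by
        rw [pow_one] at hdvd
        exact hone_sub_dvd.mp hdvd
      have hS : (∑ i ∈ Finset.range r, c i) = 1 := by
        rw [heval1] at hf1
        exact (sub_eq_zero.mp hf1).symm
      have hrange : {s : Fin r → F | nextState c s = s}
          = Set.range (fun β : F => fun _ : Fin r => β) := by
        ext s
        simp only [Set.mem_setOf_eq, Set.mem_range]
        constructor
        · intro hs
          exact ⟨s ⟨0, hr⟩, by funext j; exact (hfix_const s hs j).symm⟩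
        · rintro ⟨β, rfl⟩
          exact hconst_fix β (by rw [hS, one_mul])
      have hinj : Function.Injective (fun β : F => fun _ : Fin r => β) :=
        fun a b h => congrFun h ⟨0, hr⟩
      rw [hsetfix, hrange, pow_one, ← Nat.card_coe_set_eq,
        Nat.card_range_of_injective hinj, Nat.card_eq_fintype_card, hq]
  -- complement set
  have hcompl : {s : Fin r → F | stateCycleLen c s = T} =
      {s : Fin r → F | stateCycleLen c s = 1}ᶜ := by
    ext s
    simp only [Set.mem_setOf_eq, Set.mem_compl_iff]
    by_cases h : nextState c s = s
    · have := hlen1 s h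
      constructor
      · intro hT'; omega
      · intro h1; exact absurd this h1
    · have := hlenT s h
      constructor
      · intro _ h1; omega
      · intro _; exact this
  have hcardV : Nat.card (Fin r → F) = q ^ r := by
    rw [Nat.card_eq_fintype_card, Fintype.card_fun, Fintype.card_fin, hq]
  have hcardT : {s : Fin r → F | stateCycleLen c s = T}.ncard = q ^ r - q ^ d₀ := by
    have h := Set.ncard_add_ncard_compl {s : Fin r → F | stateCycleLen c s = 1}
      (Set.toFinite _)
    rw [hcardV, hcard1] at h
    rw [hcompl]
    omega
  refine ⟨hcard1, hcardT, ?_⟩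
  -- divisibility
  rw [← hcardT]
  have hinj : Function.Injective (nextState c : (Fin r → F) → (Fin r → F)) := by
    intro a b hab
    have ha := hBT a
    have hb := hBT b
    rw [show T = (T - 1) + 1 by omega, Function.iterate_succ_apply] at ha hb
    rw [← ha, ← hb, hab]
  have hsame : ∀ x : Fin r → F, stateCycleLen c (nextState c x) = stateCycleLen c x := by
    intro x
    rw [hscl, hscl]
    congr 1
    ext k
    simp only [Set.mem_setOf_eq, and_congr_right_iff]
    intro _
    rw [← Function.iterate_succ_apply, Function.iterate_succ_apply']
    exact ⟨fun h => hinj h, fun h => congrArg _ h⟩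
  have hfin : ({s : Fin r → F | stateCycleLen c s = T}).Finite := Set.toFinite _
  rw [Set.ncard_eq_toFinset_card _ hfin]
  apply my_card_dvd_aux (nextState c) T (by omega) hfin.toFinset.card _ le_rfl
  · intro x hx
    rw [Set.Finite.mem_toFinset] at hx ⊢
    rw [Set.mem_setOf_eq] at hx ⊢
    rw [hsame x, hx]
  · intro x _
    exact hBT x
  · intro x hx k hk hkT hiter
    rw [Set.Finite.mem_toFinset, Set.mem_setOf_eq] at hx
    have hle : stateCycleLen c x ≤ k := by
      rw [hscl]
      exact Nat.sInf_le ⟨hk, hiter⟩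
    omega
end
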